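/- For every integer g ≥ 1 there exist polynomials Q_g, R_g ∈ ℚ[y], each of degree at most 2g − 1, such that (1 − 108w)^{5g−1} · W_g = w · Q_g(w) and (1 − 108w)^{5g−1} · Ṽ_g = (1 − 6v) · R_g(w), where P(w) denotes substitution of the power series w into the polynomial P. In particular, Ṽ₁ = 54·(1 − 6v)·(1 − 108w)⁻⁴ and W₁ = 162·w·(5 − 324w)·(1 − 108w)⁻⁴. -/

import Mathlib

open PowerSeries

/-- The formal derivative `d/dx` on `ℚ⟦x⟧`. -/
noncomputable def D : PowerSeries ℚ → PowerSeries ℚ := PowerSeries.derivativeFun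

lemma D_add (f g : ℚ⟦X⟧) : D (f + g) = D f + D g := PowerSeries.derivativeFun_add f g

lemma D_mul (f g : ℚ⟦X⟧) : D (f * g) = f * D g + g * D f := by
  simpa [D, smul_eq_mul] using PowerSeries.derivativeFun_mul f g

lemma D_C (c : ℚ) : D (C c) = 0 := PowerSeries.derivative_C

lemma D_one : D 1 = 0 := PowerSeries.derivativeFun_one

lemma D_X : D (X : ℚ⟦X⟧) = 1 := by
  exact PowerSeries.derivative_X

lemma D_smul (c : ℚ) (f : ℚ⟦X⟧) : D (C c * f) = C c * D f := by
  rw [D_mul, D_C]; ring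

lemma D_sub (f g : ℚ⟦X⟧) : D (f - g) = D f - D g := by
  have h := D_add (f - g) g
  rw [sub_add_cancel] at h
  linear_combination -h

lemma D_pow' (f : ℚ⟦X⟧) : ∀ n : ℕ, D (f ^ n) * f = (n : ℚ⟦X⟧) * f ^ n * D f := by
  intro n
  induction n with
  | zero => simp [D_one]
  | succ n ih =>
    rw [pow_succ, D_mul]
    push_cast
    ring_nf
    ring_nf at ih
    linear_combination f * ih

lemma D_pow_succ (f : ℚ⟦X⟧) (n : ℕ) : D (f ^ (n+1)) = ((n:ℚ⟦X⟧)+1) * f ^ n * D f := by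
  induction n with
  | zero => simp [pow_succ, D_mul, D_one]
  | succ n ih =>
    rw [pow_succ, D_mul, ih]
    push_cast
    ring

lemma D_aeval (w : ℚ⟦X⟧) (P : Polynomial ℚ) :
    D (Polynomial.aeval w P) = Polynomial.aeval w (Polynomial.derivative P) * D w := by
  induction P using Polynomial.induction_on' with
  | add p q hp hq => simp only [map_add, D_add, hp, hq, add_mul]
  | monomial n c =>
    rcases n with _ | k
    · simp only [Polynomial.derivative_monomial, Nat.cast_zero, mul_zero, Polynomial.monomial_zero_right,
        map_zero, zero_mul, Polynomial.aeval_monomial, pow_zero, mul_one,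
        ← PowerSeries.C_eq_algebraMap, D_C]
    · rw [Polynomial.derivative_monomial, Polynomial.aeval_monomial, Polynomial.aeval_monomial,
        ← PowerSeries.C_eq_algebraMap, ← PowerSeries.C_eq_algebraMap, D_smul, D_pow_succ]
      simp only [Nat.add_sub_cancel, map_mul, map_natCast]
      push_cast
      ring

open Polynomial in
lemma deg_mul_le {P Q : Polynomial ℚ} {a b : ℕ} (hP : P.natDegree ≤ a) (hQ : Q.natDegree ≤ b) :
    (P * Q).natDegree ≤ a + b :=
  le_trans (Polynomial.natDegree_mul_le) (add_le_add hP hQ)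

lemma deg_add_le {P Q : Polynomial ℚ} {a : ℕ} (hP : P.natDegree ≤ a) (hQ : Q.natDegree ≤ a) :
    (P + Q).natDegree ≤ a :=
  le_trans (Polynomial.natDegree_add_le P Q) (max_le hP hQ)

lemma deg_deriv_mul {A B : Polynomial ℚ} {d : ℕ} (hA : A.natDegree ≤ d) (hB : B.natDegree ≤ 1) :
    (Polynomial.derivative A * B).natDegree ≤ d := by
  by_cases h0 : A.natDegree = 0
  · obtain ⟨c, rfl⟩ := Polynomial.natDegree_eq_zero.mp h0
    simp
  · have h1 := Polynomial.natDegree_derivative_lt h0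
    exact le_trans (Polynomial.natDegree_mul_le) (by omega)

lemma deg_oneX : ((1 : Polynomial ℚ) - 108 * Polynomial.X).natDegree ≤ 1 := by
  compute_degree

lemma deg_oneX' : ((1 : Polynomial ℚ) - 72 * Polynomial.X).natDegree ≤ 1 := by
  compute_degree

/-- `f = P(w) / (1-108w)^m` with `deg P ≤ d`. -/
def Plain (w : ℚ⟦X⟧) (m d : ℕ) (f : ℚ⟦X⟧) : Prop :=
  ∃ P : Polynomial ℚ, P.natDegree ≤ d ∧ (1 - 108 * w) ^ m * f = Polynomial.aeval w P

/-- `f = u * P(w) / (1-108w)^m` with `deg P ≤ d`. -/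
def Uf (u w : ℚ⟦X⟧) (m d : ℕ) (f : ℚ⟦X⟧) : Prop :=
  ∃ P : Polynomial ℚ, P.natDegree ≤ d ∧ (1 - 108 * w) ^ m * f = u * Polynomial.aeval w P

/-- `f = u * w * P(w) / (1-108w)^m` with `deg P ≤ d`. -/
def UW (u w : ℚ⟦X⟧) (m d : ℕ) (f : ℚ⟦X⟧) : Prop :=
  ∃ P : Polynomial ℚ, P.natDegree ≤ d ∧ (1 - 108 * w) ^ m * f = u * w * Polynomial.aeval w P

section Steps

variable {u w : ℚ⟦X⟧}

lemma aeval_oneX : Polynomial.aeval w ((1 : Polynomial ℚ) - 108 * Polynomial.X) = 1 - 108 * w := by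
  simp only [map_sub, map_one, map_mul, map_ofNat, Polynomial.aeval_X]

lemma aeval_oneX' : Polynomial.aeval w ((1 : Polynomial ℚ) - 72 * Polynomial.X) = 1 - 72 * w := by
  simp only [map_sub, map_one, map_mul, map_ofNat, Polynomial.aeval_X]

lemma Plain.pad {m d f} (h : Plain w m d f) (k : ℕ) : Plain w (m + k) (d + k) f := by
  obtain ⟨P, hd, hP⟩ := h
  refine ⟨((1:Polynomial ℚ) - 108 * Polynomial.X) ^ k * P, ?_, ?_⟩
  · have : (((1:Polynomial ℚ) - 108 * Polynomial.X) ^ k).natDegree ≤ k := by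
      calc _ ≤ k * (((1:Polynomial ℚ) - 108 * Polynomial.X)).natDegree :=
            Polynomial.natDegree_pow_le
        _ ≤ k * 1 := Nat.mul_le_mul_left k deg_oneX
        _ = k := by omega
    have := deg_mul_le this hd
    omega
  · rw [map_mul, map_pow, aeval_oneX, pow_add]
    linear_combination (1-108*w)^k * hP

lemma Uf.pad {m d f} (h : Uf u w m d f) (k : ℕ) : Uf u w (m + k) (d + k) f := by
  obtain ⟨P, hd, hP⟩ := h
  refine ⟨((1:Polynomial ℚ) - 108 * Polynomial.X) ^ k * P, ?_, ?_⟩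
  · have : (((1:Polynomial ℚ) - 108 * Polynomial.X) ^ k).natDegree ≤ k := by
      calc _ ≤ k * (((1:Polynomial ℚ) - 108 * Polynomial.X)).natDegree :=
            Polynomial.natDegree_pow_le
        _ ≤ k * 1 := Nat.mul_le_mul_left k deg_oneX
        _ = k := by omega
    have := deg_mul_le this hd
    omega
  · rw [map_mul, map_pow, aeval_oneX, pow_add]
    linear_combination (1-108*w)^k * hP

lemma UW.pad {m d f} (h : UW u w m d f) (k : ℕ) : UW u w (m + k) (d + k) f := by
  obtain ⟨P, hd, hP⟩ := h
  refine ⟨((1:Polynomial ℚ) - 108 * Polynomial.X) ^ k * P, ?_, ?_⟩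
  · have : (((1:Polynomial ℚ) - 108 * Polynomial.X) ^ k).natDegree ≤ k := by
      calc _ ≤ k * (((1:Polynomial ℚ) - 108 * Polynomial.X)).natDegree :=
            Polynomial.natDegree_pow_le
        _ ≤ k * 1 := Nat.mul_le_mul_left k deg_oneX
        _ = k := by omega
    have := deg_mul_le this hd
    omega
  · rw [map_mul, map_pow, aeval_oneX, pow_add]
    linear_combination (1-108*w)^k * hP

lemma Plain.mono {m d f} (h : Plain w m d f) {m' d' : ℕ} (hm : m ≤ m') (hd : d + (m' - m) ≤ d') :
    Plain w m' d' f := by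
  obtain ⟨P, hP1, hP2⟩ := (h.pad (m' - m))
  exact ⟨P, by omega, by rwa [show m + (m' - m) = m' by omega] at hP2⟩

lemma Uf.mono {m d f} (h : Uf u w m d f) {m' d' : ℕ} (hm : m ≤ m') (hd : d + (m' - m) ≤ d') :
    Uf u w m' d' f := by
  obtain ⟨P, hP1, hP2⟩ := (h.pad (m' - m))
  exact ⟨P, by omega, by rwa [show m + (m' - m) = m' by omega] at hP2⟩

lemma UW.mono {m d f} (h : UW u w m d f) {m' d' : ℕ} (hm : m ≤ m') (hd : d + (m' - m) ≤ d') :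
    UW u w m' d' f := by
  obtain ⟨P, hP1, hP2⟩ := (h.pad (m' - m))
  exact ⟨P, by omega, by rwa [show m + (m' - m) = m' by omega] at hP2⟩

lemma D_t (w : ℚ⟦X⟧) : D (1 - 108 * w) = (-108) * D w := by
  have h108 : (108 : ℚ⟦X⟧) = C 108 := by rw [map_ofNat]
  rw [D_sub, D_one, h108, D_smul]
  ring

lemma stepPlain (hDw : (1 - 108*w) * D w = u) {m d : ℕ} {f : ℚ⟦X⟧}
    (h : Plain w m d f) :
    Uf u w (m+2) d (D f) := by
  obtain ⟨A, hd, hA⟩ := h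
  refine ⟨Polynomial.derivative A * (1 - 108 * Polynomial.X)
      + Polynomial.C (108 * (m:ℚ)) * A, ?_, ?_⟩
  · exact deg_add_le (deg_deriv_mul hd deg_oneX)
      (le_trans (Polynomial.natDegree_C_mul_le _ _) hd)
  · have h1 := congrArg D hA
    rw [D_mul, D_aeval w A] at h1
    have h2 := D_pow' (1 - 108*w) m
    have hDt : (1 - 108*w) * D (1 - 108*w) = (-108) * u := by
      rw [D_t]; linear_combination (-108 : ℚ⟦X⟧) * hDw
    simp only [map_add, map_mul, map_sub, map_one, map_ofNat, map_neg, Polynomial.aeval_X,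
      Polynomial.aeval_C, map_natCast]
    linear_combination (1-108*w)^2 * h1 - (1-108*w) * f * h2
      - (m : ℚ⟦X⟧) * (1-108*w)^m * f * hDt + (108 * (m:ℚ⟦X⟧)) * u * hA
      + Polynomial.aeval w (Polynomial.derivative A) * (1-108*w) * hDw

lemma stepU (hu2 : u^2 = 1 - 72*w) (hDu : (1 - 108*w) * D u = -36)
    (hDw : (1 - 108*w) * D w = u) {m d : ℕ} {f : ℚ⟦X⟧}
    (h : Uf u w m d f) :
    Plain w (m+2) (d+1) (D f) := by
  obtain ⟨A, hd, hA⟩ := h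
  refine ⟨((Polynomial.C (-36) * A + (1 - 72 * Polynomial.X) * Polynomial.derivative A)
        * (1 - 108 * Polynomial.X))
      + Polynomial.C (108 * (m:ℚ)) * ((1 - 72 * Polynomial.X) * A), ?_, ?_⟩
  · refine deg_add_le (deg_mul_le (deg_add_le ?_ ?_) deg_oneX) ?_
    · exact le_trans (Polynomial.natDegree_C_mul_le _ _) (by omega)
    · rw [mul_comm]
      exact le_trans (deg_deriv_mul hd deg_oneX') (by omega)
    · exact le_trans (Polynomial.natDegree_C_mul_le _ _)
        (le_trans (deg_mul_le deg_oneX' hd) (by omega))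
  · have h1 := congrArg D hA
    rw [D_mul, D_mul, D_aeval w A] at h1
    have h2 := D_pow' (1 - 108*w) m
    have hDt : (1 - 108*w) * D (1 - 108*w) = (-108) * u := by
      rw [D_t]; linear_combination (-108 : ℚ⟦X⟧) * hDw
    simp only [map_add, map_mul, map_sub, map_one, map_ofNat, map_neg, Polynomial.aeval_X,
      Polynomial.aeval_C, map_natCast]
    linear_combination (1-108*w)^2 * h1 - (1-108*w) * f * h2
      - (m : ℚ⟦X⟧) * (1-108*w)^m * f * hDt
      + u * Polynomial.aeval w (Polynomial.derivative A) * (1-108*w) * hDw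
      + (108 * (m:ℚ⟦X⟧)) * u * hA
      + Polynomial.aeval w A * (1-108*w) * hDu
      + (108 * (m:ℚ⟦X⟧) * Polynomial.aeval w A
          + Polynomial.aeval w (Polynomial.derivative A) * (1-108*w)) * hu2

/-- `f = w * P(w) / (1-108w)^m`. -/
def Wf (w : ℚ⟦X⟧) (m d : ℕ) (f : ℚ⟦X⟧) : Prop :=
  ∃ P : Polynomial ℚ, P.natDegree ≤ d ∧ (1 - 108 * w) ^ m * f = w * Polynomial.aeval w P

lemma Plain.add {m d f g} (hf : Plain w m d f) (hg : Plain w m d g) : Plain w m d (f + g) := by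
  obtain ⟨P, hP1, hP2⟩ := hf; obtain ⟨Q, hQ1, hQ2⟩ := hg
  exact ⟨P + Q, deg_add_le hP1 hQ1, by rw [map_add]; linear_combination hP2 + hQ2⟩

lemma Plain.zero {m d} : Plain w m d 0 := ⟨0, by simp, by simp⟩

lemma UW.add {m d f g} (hf : UW u w m d f) (hg : UW u w m d g) : UW u w m d (f + g) := by
  obtain ⟨P, hP1, hP2⟩ := hf; obtain ⟨Q, hQ1, hQ2⟩ := hg
  exact ⟨P + Q, deg_add_le hP1 hQ1, by rw [map_add]; linear_combination hP2 + hQ2⟩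

lemma UW.zero {m d} : UW u w m d 0 := ⟨0, by simp, by simp⟩

lemma Plain.cmul {m d f} (c : ℚ) (hf : Plain w m d f) : Plain w m d (C c * f) := by
  obtain ⟨P, hP1, hP2⟩ := hf
  refine ⟨Polynomial.C c * P, le_trans (Polynomial.natDegree_C_mul_le _ _) hP1, ?_⟩
  rw [map_mul, Polynomial.aeval_C, ← PowerSeries.C_eq_algebraMap]
  linear_combination (C c) * hP2

lemma UW.cmul {m d f} (c : ℚ) (hf : UW u w m d f) : UW u w m d (C c * f) := by
  obtain ⟨P, hP1, hP2⟩ := hf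
  refine ⟨Polynomial.C c * P, le_trans (Polynomial.natDegree_C_mul_le _ _) hP1, ?_⟩
  rw [map_mul, Polynomial.aeval_C, ← PowerSeries.C_eq_algebraMap]
  linear_combination (C c) * hP2

lemma Uf.mulUf (hu2 : u^2 = 1 - 72*w) {m1 d1 m2 d2 f1 f2}
    (h1 : Uf u w m1 d1 f1) (h2 : Uf u w m2 d2 f2) :
    Plain w (m1+m2) (d1+d2+1) (f1 * f2) := by
  obtain ⟨P, hP1, hP2⟩ := h1; obtain ⟨Q, hQ1, hQ2⟩ := h2
  refine ⟨(1 - 72 * Polynomial.X) * (P * Q), ?_, ?_⟩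
  · have := deg_mul_le deg_oneX' (deg_mul_le hP1 hQ1); omega
  · rw [map_mul, map_mul, aeval_oneX']
    rw [pow_add]
    calc (1-108*w)^m1 * (1-108*w)^m2 * (f1 * f2)
        = ((1-108*w)^m1 * f1) * ((1-108*w)^m2 * f2) := by ring
      _ = (u * Polynomial.aeval w P) * (u * Polynomial.aeval w Q) := by rw [hP2, hQ2]
      _ = u^2 * (Polynomial.aeval w P * Polynomial.aeval w Q) := by ring
      _ = _ := by rw [hu2]

lemma Wf.mulUf {m1 d1 m2 d2 f1 f2} (h1 : Wf w m1 d1 f1) (h2 : Uf u w m2 d2 f2) :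
    UW u w (m1+m2) (d1+d2) (f1 * f2) := by
  obtain ⟨P, hP1, hP2⟩ := h1; obtain ⟨Q, hQ1, hQ2⟩ := h2
  refine ⟨P * Q, deg_mul_le hP1 hQ1, ?_⟩
  rw [map_mul, pow_add]
  calc (1-108*w)^m1 * (1-108*w)^m2 * (f1 * f2)
      = ((1-108*w)^m1 * f1) * ((1-108*w)^m2 * f2) := by ring
    _ = (w * Polynomial.aeval w P) * (u * Polynomial.aeval w Q) := by rw [hP2, hQ2]
    _ = _ := by ring

lemma Wf.toPlain {m d f} (h : Wf w m d f) : Plain w m (d+1) f := by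
  obtain ⟨P, hP1, hP2⟩ := h
  refine ⟨Polynomial.X * P, ?_, ?_⟩
  · have h2 : (Polynomial.X * P).natDegree ≤ 1 + d :=
      le_trans Polynomial.natDegree_mul_le (add_le_add Polynomial.natDegree_X_le hP1)
    omega
  · rw [map_mul, Polynomial.aeval_X, hP2]

lemma iterPlain (hu2 : u^2 = 1 - 72*w) (hDu : (1 - 108*w) * D u = -36)
    (hDw : (1 - 108*w) * D w = u) :
    ∀ (k : ℕ) {m d : ℕ} {f : ℚ⟦X⟧}, Plain w m d f → Plain w (m+4*k) (d+k) (D^[2*k] f) := by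
  intro k
  induction k with
  | zero => intro m d f h; simpa using h
  | succ k ih =>
    intro m d f h
    have h2 : Plain w (m+4) (d+1) (D (D f)) := stepU hu2 hDu hDw (stepPlain hDw h)
    have h3 := ih h2
    have e : 2*(k+1) = 2*k + 2 := by omega
    rw [e, Function.iterate_add_apply]
    have e2 : D^[2] f = D (D f) := rfl
    rw [e2]
    exact h3.mono (by omega) (by omega)

lemma iterUf (hu2 : u^2 = 1 - 72*w) (hDu : (1 - 108*w) * D u = -36)
    (hDw : (1 - 108*w) * D w = u) :
    ∀ (k : ℕ) {m d : ℕ} {f : ℚ⟦X⟧}, Uf u w m d f → Uf u w (m+4*k) (d+k) (D^[2*k] f) := by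
  intro k
  induction k with
  | zero => intro m d f h; simpa using h
  | succ k ih =>
    intro m d f h
    have h2 : Uf u w (m+4) (d+1) (D (D f)) := stepPlain hDw (stepU hu2 hDu hDw h)
    have h3 := ih h2
    have e : 2*(k+1) = 2*k + 2 := by omega
    rw [e, Function.iterate_add_apply]
    have e2 : D^[2] f = D (D f) := rfl
    rw [e2]
    exact h3.mono (by omega) (by omega)

end Steps

theorem stmt2 (v w : PowerSeries ℚ) (hv0 : constantCoeff v = 0)
    (hv : 6 * (X : ℚ⟦X⟧) = (1 - 9 * v + 18 * v ^ 2) * v)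
    (hw : w = X * (1 - 6 * v)⁻¹)
    (V W : ℕ → PowerSeries ℚ) (hV0 : V 0 = v) (hW0 : W 0 = w)
    (hVg : ∀ g, 1 ≤ g →
      V g = 3 * ∑ p ∈ Finset.HasAntidiagonal.antidiagonal g, V p.1 * V p.2
        + 6 * ∑ p ∈ Finset.HasAntidiagonal.antidiagonal g,
            C (1 / ((4 : ℚ) ^ p.1 * (2 * p.1).factorial)) * D^[2 * p.1] (W p.2))
    (hWg : ∀ g, 1 ≤ g →
      W g = 6 * ∑ p ∈ Finset.HasAntidiagonal.antidiagonal g, ∑ r ∈ Finset.HasAntidiagonal.antidiagonal p.2,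
            C (1 / ((4 : ℚ) ^ p.1 * (2 * p.1).factorial)) * (W r.1 * D^[2 * p.1] (V r.2))) :
    (∀ g, 1 ≤ g → ∃ Q R : Polynomial ℚ,
      Q.natDegree ≤ 2 * g - 1 ∧ R.natDegree ≤ 2 * g - 1 ∧
      (1 - 108 * w) ^ (5 * g - 1) * W g = w * Polynomial.aeval w Q ∧
      (1 - 108 * w) ^ (5 * g - 1) * V g = (1 - 6 * v) * Polynomial.aeval w R) ∧
    V 1 = 54 * (1 - 6 * v) * ((1 - 108 * w) ^ 4)⁻¹ ∧
    W 1 = 162 * w * (5 - 324 * w) * ((1 - 108 * w) ^ 4)⁻¹ := by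
  -- basic facts
  have cu : constantCoeff (1 - 6 * v) = 1 := by
    simp [hv0]
  have hu0 : (1 - 6 * v) ≠ 0 := by
    intro h
    rw [h] at cu
    simp at cu
  have hxw : (1 - 6 * v) * w = X := by
    rw [hw, ← mul_assoc, mul_comm (1 - 6*v) X, mul_assoc,
      PowerSeries.mul_inv_cancel _ (by rw [cu]; norm_num), mul_one]
  have cw : constantCoeff w = 0 := by
    have := congrArg (constantCoeff) hxw
    rw [map_mul, cu, one_mul] at this
    simpa using this
  have hu3 : (1 - 6*v)^3 = (1 - 6*v) - 72 * X := by
    linear_combination 12 * hv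
  have hu2 : (1 - 6*v)^2 = 1 - 72 * w := by
    have key : (1 - 6*v) * (1 - 6*v)^2 = (1 - 6*v) * (1 - 72*w) := by
      linear_combination hu3 + 72 * hxw
    exact mul_left_cancel₀ hu0 key
  have hDu : (1 - 108*w) * D (1 - 6*v) = -36 := by
    have h3 := D_pow' (1 - 6*v) 3
    have hDu3 : D ((1 - 6*v)^3) = D (1 - 6*v) - 72 := by
      rw [hu3, D_sub, show (72 : ℚ⟦X⟧) * X = C 72 * X by rw [map_ofNat], D_smul, D_X,
        map_ofNat, mul_one]
    have h2ne : (2 : ℚ⟦X⟧) ≠ 0 := by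
      intro h
      have := congrArg (constantCoeff) h
      rw [map_ofNat, map_zero] at this
      norm_num at this
    have key : ((2:ℚ⟦X⟧) * (1 - 6*v)) * ((1 - 108*w) * D (1 - 6*v))
        = ((2:ℚ⟦X⟧) * (1 - 6*v)) * (-36) := by
      push_cast at h3
      linear_combination (1 - 6*v) * hDu3 - h3 - 3 * D (1 - 6*v) * hu3
        - 216 * D (1 - 6*v) * hxw
    exact mul_left_cancel₀ (mul_ne_zero h2ne hu0) key
  have hDv : (1 - 108*w) * D v = 6 := by
    have e : D (1 - 6*v) = -6 * D v := by
      rw [D_sub, D_one, show (6 : ℚ⟦X⟧) * v = C 6 * v by rw [map_ofNat], D_smul, map_ofNat]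
      ring
    rw [e] at hDu
    have h6 : (-6 : ℚ⟦X⟧) ≠ 0 := by
      intro h
      have := congrArg (constantCoeff) h
      rw [map_neg, map_ofNat, map_zero] at this
      norm_num at this
    refine mul_left_cancel₀ h6 ?_
    linear_combination hDu
  have hDw : (1 - 108*w) * D w = 1 - 6*v := by
    have h := congrArg D hxw
    rw [D_mul, D_X] at h
    have key : (1 - 6*v) * ((1 - 108*w) * D w) = (1 - 6*v) * (1 - 6*v) := by
      linear_combination (1 - 108*w) * h - w * hDu - hu2
    exact mul_left_cancel₀ hu0 key
  have hDt : (1 - 108*w) * D (1 - 108*w) = -108 * (1 - 6*v) := by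
    rw [D_t]
    linear_combination (-108 : ℚ⟦X⟧) * hDw
  -- explicit second derivatives
  have hD2w : (1 - 108*w)^3 * D (D w) = 72 - 3888 * w := by
    have h1 := congrArg D hDw
    rw [D_mul] at h1
    have e : D (1 - 6*v) = -6 * D v := by
      rw [D_sub, D_one, show (6 : ℚ⟦X⟧) * v = C 6 * v by rw [map_ofNat], D_smul, map_ofNat]
      ring
    rw [e] at h1
    linear_combination (1 - 108*w)^2 * h1 - ((1-108*w) * D (1-108*w)) * hDw
      - (1-6*v) * hDt - 6*(1-108*w) * hDv + 108 * hu2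
  have hD2v : (1 - 108*w)^3 * D (D v) = 648 * (1 - 6*v) := by
    have h1 := congrArg D hDv
    rw [D_mul, show D (6 : ℚ⟦X⟧) = 0 by rw [show (6:ℚ⟦X⟧) = C 6 by rw [map_ofNat], D_C]] at h1
    linear_combination (1 - 108*w)^2 * h1 - ((1-108*w) * D (1-108*w)) * hDv - 6 * hDt
  have hanti1 : (Finset.HasAntidiagonal.antidiagonal (1:ℕ)) = {((0:ℕ),(1:ℕ)), (1,0)} := by decide
  have hE1 := hVg 1 le_rfl
  have hE2 := hWg 1 le_rfl
  simp only [hanti1, Finset.Nat.antidiagonal_zero,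
    Finset.sum_pair (show ((0:ℕ),(1:ℕ)) ≠ (1,0) by decide),
    Finset.sum_singleton] at hE1 hE2
  norm_num [Nat.factorial, hV0, hW0] at hE1 hE2
  have hc : (8:ℚ⟦X⟧) * C (1/8 : ℚ) = 1 := by
    rw [show (8:ℚ⟦X⟧) = C 8 from (map_ofNat _ 8).symm, ← map_mul]
    norm_num
  have htV1 : (1-108*w)^4 * V 1 = 54 * (1-6*v) := by
    linear_combination (1-6*v)*(1-108*w)^3 * hE1 + 6*(1-108*w)^3 * hE2
      - (1-108*w)^3 * V 1 * hu2 + 6*(C (1/8 : ℚ))*(1-6*v) * hD2w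
      + 36*(C (1/8 : ℚ))*w * hD2v + 54*(1-6*v) * hc
  have htW1 : (1-108*w)^4 * W 1 = 810*w - 52488*w^2 := by
    linear_combination (1-6*v)*(1-108*w)^3 * hE2 + 6*w*(1-108*w)^3 * hE1
      + (3888*(C (1/8 : ℚ))*w - (1-108*w)^3 * W 1) * hu2
      + 6*(C (1/8 : ℚ))*(1-6*v)*w * hD2v + 36*(C (1/8 : ℚ))*w * hD2w
      + (810*w - 52488*w^2) * hc
  have ct : constantCoeff (1 - 108*w) = 1 := by simp [cw]
  have ct4 : constantCoeff ((1 - 108*w)^4) = 1 := by rw [map_pow, ct, one_pow]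
  have hinv : (1-108*w)^4 * ((1-108*w)^4)⁻¹ = 1 :=
    PowerSeries.mul_inv_cancel _ (by rw [ct4]; norm_num)
  have hV1val : V 1 = 54*(1-6*v)*((1-108*w)^4)⁻¹ := by
    linear_combination ((1-108*w)^4)⁻¹ * htV1 - V 1 * hinv
  have hW1val : W 1 = 162*w*(5-324*w)*((1-108*w)^4)⁻¹ := by
    linear_combination ((1-108*w)^4)⁻¹ * htW1 - W 1 * hinv
  refine ⟨?_, hV1val, hW1val⟩
  -- general statement by strong induction
  have main : ∀ g : ℕ, 1 ≤ g →
      (∃ R : Polynomial ℚ, R.natDegree ≤ 2*g - 1 ∧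
        (1-108*w)^(5*g-1) * V g = (1-6*v) * Polynomial.aeval w R) ∧
      (∃ Q : Polynomial ℚ, Q.natDegree ≤ 2*g - 1 ∧
        (1-108*w)^(5*g-1) * W g = w * Polynomial.aeval w Q) := by
    intro g
    induction g using Nat.strong_induction_on with
    | _ g ih =>
    intro hg1
    obtain ⟨G, rfl⟩ : ∃ G, g = G + 1 := ⟨g - 1, by omega⟩
    -- forms for lower genus
    have hUfV : ∀ b, 1 ≤ b → b ≤ G → Uf (1-6*v) w (5*b-1) (2*b-1) (V b) := by
      intro b h1 h2
      exact (ih b (by omega) h1).1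
    have hWfW : ∀ a, 1 ≤ a → a ≤ G → Wf w (5*a-1) (2*a-1) (W a) := by
      intro a h1 h2
      exact (ih a (by omega) h1).2
    have hWf0 : Wf w 0 0 w := ⟨1, by simp, by simp⟩
    have ufDw : Uf (1-6*v) w 1 0 (D w) := ⟨1, by simp, by rw [pow_one, hDw]; simp⟩
    have plainDv : Plain w 1 0 (D v) := by
      refine ⟨Polynomial.C 6, by simp, ?_⟩
      rw [pow_one, hDv, Polynomial.aeval_C, ← PowerSeries.C_eq_algebraMap, map_ofNat]
    have plainD2w : Plain w 3 1 (D (D w)) := stepU hu2 hDu hDw ufDw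
    have ufD2v : Uf (1-6*v) w 3 0 (D (D v)) := stepPlain hDw plainDv
    have iterW0 : ∀ k : ℕ, Plain w (4*k+3) (k+1) (D^[2*(k+1)] w) := by
      intro k
      have h := iterPlain hu2 hDu hDw k plainD2w
      have e : 2*(k+1) = 2*k + 2 := by omega
      rw [e, Function.iterate_add_apply]
      exact h.mono (by omega) (by omega)
    have iterV0 : ∀ k : ℕ, Uf (1-6*v) w (4*k+3) k (D^[2*(k+1)] v) := by
      intro k
      have h := iterUf hu2 hDu hDw k ufD2v
      have e : 2*(k+1) = 2*k + 2 := by omega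
      rw [e, Function.iterate_add_apply]
      exact h.mono (by omega) (by omega)
    -- membership facts
    have m0g : ((0:ℕ), G+1) ∈ Finset.HasAntidiagonal.antidiagonal (G+1) := by simp
    have mg0 : ((G+1:ℕ), 0) ∈ (Finset.HasAntidiagonal.antidiagonal (G+1)).erase (0, G+1) := by
      rw [Finset.mem_erase]
      constructor
      · intro h
        simp [Prod.ext_iff] at h
      · simp
    have mg0' : ((G+1:ℕ), 0) ∈ Finset.HasAntidiagonal.antidiagonal (G+1) := by simp
    have m0g' : ((0:ℕ), G+1) ∈ (Finset.HasAntidiagonal.antidiagonal (G+1)).erase (G+1, 0) := by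
      rw [Finset.mem_erase]
      constructor
      · intro h
        simp [Prod.ext_iff] at h
      · simp
    -- extract special terms from the V-equation
    have hE1 := hVg (G+1) (by omega)
    rw [← Finset.add_sum_erase _ (fun p => V p.1 * V p.2) m0g,
      ← Finset.add_sum_erase _ (fun p => V p.1 * V p.2) mg0,
      ← Finset.add_sum_erase _
        (fun p => C (1 / ((4 : ℚ) ^ p.1 * (2 * p.1).factorial)) * D^[2 * p.1] (W p.2))
        m0g] at hE1
    dsimp only at hE1
    simp only [Nat.mul_zero, Function.iterate_zero, Function.iterate_zero_apply, id_eq, pow_zero,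
      Nat.factorial_zero, Nat.cast_one, one_mul, mul_one, div_one, map_one] at hE1
    rw [hV0] at hE1
    -- extract special terms from the W-equation
    have hE2 := hWg (G+1) (by omega)
    rw [← Finset.add_sum_erase _
        (fun p => ∑ r ∈ Finset.HasAntidiagonal.antidiagonal p.2,
          C (1 / ((4 : ℚ) ^ p.1 * (2 * p.1).factorial)) * (W r.1 * D^[2 * p.1] (V r.2)))
        m0g] at hE2
    dsimp only at hE2
    simp only [Nat.mul_zero, Function.iterate_zero, Function.iterate_zero_apply, id_eq, pow_zero,
      Nat.factorial_zero, Nat.cast_one, one_mul, mul_one, div_one, map_one] at hE2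
    rw [← Finset.add_sum_erase _ (fun r : ℕ × ℕ => W r.1 * V r.2) mg0',
      ← Finset.add_sum_erase _ (fun r : ℕ × ℕ => W r.1 * V r.2) m0g'] at hE2
    dsimp only at hE2
    rw [hV0, hW0] at hE2
    -- bound the four remainder sums
    have hb1 : Plain w (5*G+3) (2*G+1)
        (∑ p ∈ ((Finset.HasAntidiagonal.antidiagonal (G+1)).erase (0, G+1)).erase (G+1, 0), V p.1 * V p.2) := by
      refine Finset.sum_induction _ _ (fun a b ha hb => ha.add hb) Plain.zero ?_
      rintro ⟨a, b⟩ hx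
      rw [Finset.mem_erase, Finset.mem_erase, Finset.HasAntidiagonal.mem_antidiagonal] at hx
      obtain ⟨hne1, hne2, hab⟩ := hx
      have ha : 1 ≤ a := by
        rcases Nat.eq_zero_or_pos a with h' | h'
        · exact absurd (by rw [h', show b = G+1 by omega]) hne2
        · exact h'
      have hb : 1 ≤ b := by
        rcases Nat.eq_zero_or_pos b with h' | h'
        · exact absurd (by rw [h', show a = G+1 by omega]) hne1
        · exact h'
      have := Uf.mulUf hu2 (hUfV a ha (by omega)) (hUfV b hb (by omega))
      exact this.mono (by omega) (by omega)
    have hb2 : Plain w (5*G+3) (2*G+1)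
        (∑ p ∈ (Finset.HasAntidiagonal.antidiagonal (G+1)).erase (0, G+1),
          C (1 / ((4:ℚ) ^ p.1 * (2 * p.1).factorial)) * D^[2 * p.1] (W p.2)) := by
      refine Finset.sum_induction _ _ (fun a b ha hb => ha.add hb) Plain.zero ?_
      rintro ⟨k, h⟩ hx
      rw [Finset.mem_erase, Finset.HasAntidiagonal.mem_antidiagonal] at hx
      obtain ⟨hne, hkh⟩ := hx
      have hk : 1 ≤ k := by
        rcases Nat.eq_zero_or_pos k with h' | h'
        · exact absurd (by rw [h', show h = G+1 by omega]) hne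
        · exact h'
      have hbase : Plain w (5*G+3) (2*G+1) (D^[2*k] (W h)) := by
        rcases Nat.eq_zero_or_pos h with h0 | h1
        · subst h0
          rw [hW0]
          obtain ⟨k', rfl⟩ : ∃ k', k = k'+1 := ⟨k-1, by omega⟩
          exact (iterW0 k').mono (by omega) (by omega)
        · have := iterPlain hu2 hDu hDw k (hWfW h h1 (by omega)).toPlain
          exact this.mono (by omega) (by omega)
      exact hbase.cmul _
    have hb3a : UW (1-6*v) w (5*G+3) (2*G)
        (∑ r ∈ ((Finset.HasAntidiagonal.antidiagonal (G+1)).erase (G+1, 0)).erase (0, G+1), W r.1 * V r.2) := by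
      refine Finset.sum_induction _ _ (fun a b ha hb => ha.add hb) UW.zero ?_
      rintro ⟨a, b⟩ hx
      rw [Finset.mem_erase, Finset.mem_erase, Finset.HasAntidiagonal.mem_antidiagonal] at hx
      obtain ⟨hne1, hne2, hab⟩ := hx
      have ha : 1 ≤ a := by
        rcases Nat.eq_zero_or_pos a with h' | h'
        · exact absurd (by rw [h', show b = G+1 by omega]) hne1
        · exact h'
      have hb : 1 ≤ b := by
        rcases Nat.eq_zero_or_pos b with h' | h'
        · exact absurd (by rw [h', show a = G+1 by omega]) hne2
        · exact h'
      have := Wf.mulUf (hWfW a ha (by omega)) (hUfV b hb (by omega))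
      exact this.mono (by omega) (by omega)
    have hb3b : UW (1-6*v) w (5*G+3) (2*G)
        (∑ p ∈ (Finset.HasAntidiagonal.antidiagonal (G+1)).erase (0, G+1),
          ∑ r ∈ Finset.HasAntidiagonal.antidiagonal p.2,
            C (1 / ((4:ℚ) ^ p.1 * (2 * p.1).factorial)) * (W r.1 * D^[2 * p.1] (V r.2))) := by
      refine Finset.sum_induction _ _ (fun a b ha hb => ha.add hb) UW.zero ?_
      rintro ⟨k, c2⟩ hx
      rw [Finset.mem_erase, Finset.HasAntidiagonal.mem_antidiagonal] at hx
      obtain ⟨hne, hkc⟩ := hx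
      have hk : 1 ≤ k := by
        rcases Nat.eq_zero_or_pos k with h' | h'
        · exact absurd (by rw [h', show c2 = G+1 by omega]) hne
        · exact h'
      refine Finset.sum_induction _ _ (fun a b ha hb => ha.add hb) UW.zero ?_
      rintro ⟨a, b⟩ hr
      rw [Finset.HasAntidiagonal.mem_antidiagonal] at hr
      dsimp only at hr ⊢
      have hbase : UW (1-6*v) w (5*G+3) (2*G) (W a * D^[2*k] (V b)) := by
        rcases Nat.eq_zero_or_pos b with hb0 | hb1
        · subst hb0
          rw [hV0]
          obtain ⟨k', rfl⟩ : ∃ k', k = k'+1 := ⟨k-1, by omega⟩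
          rcases Nat.eq_zero_or_pos a with ha0 | ha1
          · subst ha0
            rw [hW0]
            exact (hWf0.mulUf (iterV0 k')).mono (by omega) (by omega)
          · exact ((hWfW a ha1 (by omega)).mulUf (iterV0 k')).mono (by omega) (by omega)
        · have hVb := iterUf hu2 hDu hDw k (hUfV b hb1 (by omega))
          rcases Nat.eq_zero_or_pos a with ha0 | ha1
          · subst ha0
            rw [hW0]
            exact (hWf0.mulUf hVb).mono (by omega) (by omega)
          · exact ((hWfW a ha1 (by omega)).mulUf hVb).mono (by omega) (by omega)
      exact hbase.cmul _
    -- assemble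
    obtain ⟨P1, hP1d, hP1⟩ := hb1
    obtain ⟨P2, hP2d, hP2⟩ := hb2
    obtain ⟨P3a, hP3ad, hP3a⟩ := hb3a
    obtain ⟨P3b, hP3bd, hP3b⟩ := hb3b
    have e5 : 5*(G+1)-1 = 5*G+4 := by omega
    have e2d : 2*(G+1)-1 = 2*G+1 := by omega
    rw [e5, e2d]
    constructor
    · refine ⟨Polynomial.C 3 * P1 + Polynomial.C 6 * P2
        + Polynomial.C 36 * Polynomial.X * (P3a + P3b), ?_, ?_⟩
      · refine deg_add_le (deg_add_le
          (le_trans (Polynomial.natDegree_C_mul_le _ _) hP1d)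
          (le_trans (Polynomial.natDegree_C_mul_le _ _) hP2d)) ?_
        exact le_trans (deg_mul_le
          (le_trans (Polynomial.natDegree_C_mul_le _ _) Polynomial.natDegree_X_le)
          (deg_add_le hP3ad hP3bd)) (by omega)
      · simp only [map_add, map_mul, Polynomial.aeval_X, Polynomial.aeval_C,
          ← PowerSeries.C_eq_algebraMap, map_ofNat]
        linear_combination (1-6*v)*(1-108*w)^(5*G+3) * hE1 + 6*(1-108*w)^(5*G+3) * hE2
          - (1-108*w)^(5*G+3) * V (G+1) * hu2 + 3*(1-6*v)*hP1 + 6*(1-6*v)*hP2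
          + 36*hP3a + 36*hP3b
    · refine ⟨Polynomial.C 6 * ((1 - 72*Polynomial.X) * (P3a + P3b))
        + Polynomial.C 18 * P1 + Polynomial.C 36 * P2, ?_, ?_⟩
      · refine deg_add_le (deg_add_le ?_
          (le_trans (Polynomial.natDegree_C_mul_le _ _) hP1d)) 
          (le_trans (Polynomial.natDegree_C_mul_le _ _) hP2d)
        refine le_trans (Polynomial.natDegree_C_mul_le _ _) ?_
        exact le_trans (deg_mul_le deg_oneX' (deg_add_le hP3ad hP3bd)) (by omega)
      · simp only [map_add, map_mul, map_sub, map_one, Polynomial.aeval_X, Polynomial.aeval_C,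
          ← PowerSeries.C_eq_algebraMap, map_ofNat]
        linear_combination (1-6*v)*(1-108*w)^(5*G+3) * hE2 + 6*w*(1-108*w)^(5*G+3) * hE1
          + (6*w*(Polynomial.aeval w P3a + Polynomial.aeval w P3b)
              - (1-108*w)^(5*G+3) * W (G+1)) * hu2
          + 6*(1-6*v)*hP3a + 6*(1-6*v)*hP3b + 18*w*hP1 + 36*w*hP2
  intro g hg
  obtain ⟨⟨R, hRd, hRe⟩, ⟨Q, hQd, hQe⟩⟩ := main g hg
  exact ⟨Q, R, hQd, hRd, hQe, hRe⟩
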